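/- Let β > 0, C ≥ 0, let (C_n)_{n≥1} be a real sequence with C_n → c where c > β > 0, and let (A_n)_{n≥1} be a sequence of positive reals satisfying A_{n+1} = (1 − C_n·n^{−1})·A_n + C·n^{−1−β} for all n ≥ 1. Then sup_{n≥1} n^{β}·A_n < ∞. -/
import Mathlib


open Filter Topology

/-- Fabian's recursion lemma, case `a = 1`: if `A_{n+1} = (1 - C_n n^{-1}) A_n
+ C n^{-1-β}` with `A_n > 0` and `C_n → c` where `c > β > 0`, then `sup_n n^β A_n < ∞`. -/
theorem fabian_recursion_linear
    (β C : ℝ) (hβ : 0 < β) (hC : 0 ≤ C)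
    (Cseq : ℕ → ℝ) (c : ℝ) (hcβ : β < c)
    (hCseq : Tendsto Cseq atTop (𝓝 c))
    (A : ℕ → ℝ) (hApos : ∀ n : ℕ, 1 ≤ n → 0 < A n)
    (hrec : ∀ n : ℕ, 1 ≤ n →
      A (n+1) = (1 - Cseq n * (n:ℝ)⁻¹) * A n + C * (n:ℝ) ^ (-1 - β)) :
    ∃ B : ℝ, ∀ n : ℕ, 1 ≤ n → (n:ℝ) ^ β * A n ≤ B := by
  set ε : ℝ := (c - β) / 2 with hεdef
  have hεpos : 0 < ε := by rw [hεdef]; linarith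
  set K : ℝ := C * 2 ^ β with hKdef
  have hKnonneg : 0 ≤ K :=
    mul_nonneg hC (Real.rpow_nonneg (by norm_num) β)
  set h : ℕ → ℝ := fun n =>
    (n:ℝ) * ((1 + (n:ℝ)⁻¹) ^ β - 1) - Cseq n * (1 + (n:ℝ)⁻¹) ^ β with hhdef
  have hseq1 : Tendsto (fun n : ℕ => 1 + (n:ℝ)⁻¹) atTop (𝓝 1) := by
    have : Tendsto (fun n : ℕ => (n:ℝ)⁻¹) atTop (𝓝 0) :=
      tendsto_inv_atTop_zero.comp tendsto_natCast_atTop_atTop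
    simpa using tendsto_const_nhds.add this
  have hseq : Tendsto (fun n : ℕ => 1 + (n:ℝ)⁻¹) atTop (𝓝[≠] (1:ℝ)) := by
    rw [tendsto_nhdsWithin_iff]
    refine ⟨hseq1, ?_⟩
    filter_upwards [eventually_ge_atTop 1] with n hn
    have hn0 : (0:ℝ) < (n:ℝ)⁻¹ := by
      have : (0:ℝ) < (n:ℝ) := by exact_mod_cast hn
      positivity
    simp only [Set.mem_compl_iff, Set.mem_singleton_iff]
    intro hcontra
    nlinarith
  have hderiv : HasDerivAt (fun x : ℝ => x ^ β) β 1 := by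
    have := Real.hasDerivAt_rpow_const (x := (1:ℝ)) (p := β) (Or.inl one_ne_zero)
    simpa using this
  have hslope : Tendsto (slope (fun x : ℝ => x ^ β) 1) (𝓝[≠] 1) (𝓝 β) :=
    hasDerivAt_iff_tendsto_slope.mp hderiv
  have hg : Tendsto (fun n : ℕ => (n:ℝ) * ((1 + (n:ℝ)⁻¹) ^ β - 1)) atTop (𝓝 β) := by
    have h2 := hslope.comp hseq
    refine h2.congr' ?_
    filter_upwards [eventually_ge_atTop 1] with n hn
    have hn0 : (n:ℝ) ≠ 0 := by
      have : (0:ℝ) < (n:ℝ) := by exact_mod_cast hn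
      linarith
    simp only [Function.comp, slope_def_field, Real.one_rpow]
    field_simp
    ring
  have hfac : Tendsto (fun n : ℕ => (1 + (n:ℝ)⁻¹) ^ β) atTop (𝓝 1) := by
    have := hseq1.rpow_const (p := β) (Or.inl one_ne_zero)
    simpa using this
  have hh : Tendsto h atTop (𝓝 (β - c)) := by
    have := hg.sub (hCseq.mul hfac)
    simpa [hhdef] using this
  have hev : ∀ᶠ n in atTop, h n < -ε := by
    refine hh.eventually_lt_const ?_
    rw [hεdef]; linarith
  obtain ⟨N₀, hN₀⟩ := eventually_atTop.mp hev
  set N : ℕ := max N₀ (max 1 ⌈ε⌉₊) with hNdef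
  have hN1 : 1 ≤ N := le_trans (le_max_left 1 _) (le_max_right N₀ _)
  have key : ∀ n : ℕ, N ≤ n →
      ((n+1:ℕ):ℝ) ^ β * A (n+1) ≤
        (1 - ε * (n:ℝ)⁻¹) * ((n:ℝ) ^ β * A n) + K * (n:ℝ)⁻¹ := by
    intro n hn
    have hn1 : 1 ≤ n := le_trans hN1 hn
    have hnR : (1:ℝ) ≤ (n:ℝ) := by exact_mod_cast hn1
    have hnpos : (0:ℝ) < (n:ℝ) := by linarith
    have hninv : (0:ℝ) < (n:ℝ)⁻¹ := by positivity
    have hhn : h n < -ε := hN₀ n (le_trans (le_max_left _ _) hn)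
    have hεn : ε ≤ (n:ℝ) := by
      have h1 : (⌈ε⌉₊ : ℕ) ≤ n := le_trans (le_trans (le_max_right 1 _) (le_max_right N₀ _)) hn
      have h2 : ((⌈ε⌉₊ : ℕ) : ℝ) ≤ (n:ℝ) := by exact_mod_cast h1
      exact le_trans (Nat.le_ceil ε) h2
    have hx : (0:ℝ) < 1 + (n:ℝ)⁻¹ := by linarith
    have e1 : ((n+1:ℕ):ℝ) = (n:ℝ) * (1 + (n:ℝ)⁻¹) := by
      push_cast
      field_simp
    have e2 : ((n+1:ℕ):ℝ) ^ β = (n:ℝ) ^ β * (1 + (n:ℝ)⁻¹) ^ β := by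
      rw [e1, Real.mul_rpow hnpos.le hx.le]
    have e3 : (n:ℝ) ^ β * (n:ℝ) ^ (-1 - β) = (n:ℝ)⁻¹ := by
      rw [← Real.rpow_add hnpos]
      have : β + (-1 - β) = -1 := by ring
      rw [this, Real.rpow_neg_one]
    have hA := hrec n hn1
    have hBpos : 0 < (n:ℝ) ^ β * A n :=
      mul_pos (Real.rpow_pos_of_pos hnpos β) (hApos n hn1)
    have hcoef : (1 + (n:ℝ)⁻¹) ^ β * (1 - Cseq n * (n:ℝ)⁻¹) = 1 + h n * (n:ℝ)⁻¹ := by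
      rw [hhdef]
      field_simp
      ring
    have hfacle : (1 + (n:ℝ)⁻¹) ^ β ≤ 2 ^ β := by
      refine Real.rpow_le_rpow hx.le ?_ hβ.le
      have : (n:ℝ)⁻¹ ≤ 1 := by
        rw [inv_le_one_iff₀]
        right; exact hnR
      linarith
    have hfacpos : 0 < (1 + (n:ℝ)⁻¹) ^ β := Real.rpow_pos_of_pos hx β
    have step1 : ((n+1:ℕ):ℝ) ^ β * A (n+1)
        = (1 + h n * (n:ℝ)⁻¹) * ((n:ℝ) ^ β * A n)
          + C * (1 + (n:ℝ)⁻¹) ^ β * (n:ℝ)⁻¹ := by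
      rw [e2, hA, ← hcoef, ← e3]
      ring
    rw [step1]
    have t1 : (1 + h n * (n:ℝ)⁻¹) * ((n:ℝ) ^ β * A n)
        ≤ (1 - ε * (n:ℝ)⁻¹) * ((n:ℝ) ^ β * A n) := by
      apply mul_le_mul_of_nonneg_right _ hBpos.le
      have : h n * (n:ℝ)⁻¹ ≤ -ε * (n:ℝ)⁻¹ :=
        mul_le_mul_of_nonneg_right hhn.le hninv.le
      linarith
    have t2 : C * (1 + (n:ℝ)⁻¹) ^ β * (n:ℝ)⁻¹ ≤ K * (n:ℝ)⁻¹ := by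
      rw [hKdef]
      apply mul_le_mul_of_nonneg_right _ hninv.le
      exact mul_le_mul_of_nonneg_left hfacle hC
    linarith
  set M : ℝ := max ((N:ℝ) ^ β * A N) (K / ε) with hMdef
  have hMK : K / ε ≤ M := le_max_right _ _
  have hbound : ∀ m : ℕ, ((N + m : ℕ) : ℝ) ^ β * A (N + m) ≤ M := by
    intro m
    induction m with
    | zero =>
      simp only [Nat.add_zero]
      exact le_max_left ((N:ℝ) ^ β * A N) (K / ε)
    | succ m ih =>
      have hn : N ≤ N + m := Nat.le_add_right _ _
      have hk := key (N + m) hn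
      have heq : N + (m + 1) = (N + m) + 1 := by omega
      rw [heq]
      refine le_trans hk ?_
      set n : ℕ := N + m with hndef
      have hn1 : 1 ≤ n := le_trans hN1 hn
      have hnR : (1:ℝ) ≤ (n:ℝ) := by exact_mod_cast hn1
      have hnpos : (0:ℝ) < (n:ℝ) := by linarith
      have hninv : (0:ℝ) < (n:ℝ)⁻¹ := by positivity
      have hεn : ε ≤ (n:ℝ) := by
        have h1 : (⌈ε⌉₊ : ℕ) ≤ n := le_trans (le_trans (le_max_right 1 _) (le_max_right N₀ _)) hn
        have h2 : ((⌈ε⌉₊ : ℕ) : ℝ) ≤ (n:ℝ) := by exact_mod_cast h1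
        exact le_trans (Nat.le_ceil ε) h2
      have hcoefnn : 0 ≤ 1 - ε * (n:ℝ)⁻¹ := by
        have : ε * (n:ℝ)⁻¹ ≤ (n:ℝ) * (n:ℝ)⁻¹ := mul_le_mul_of_nonneg_right hεn hninv.le
        rw [mul_inv_cancel₀ (ne_of_gt hnpos)] at this
        linarith
      have hKsplit : K = ε * (K / ε) := by
        field_simp
      have s1 : (1 - ε * (n:ℝ)⁻¹) * ((n:ℝ) ^ β * A n) ≤ (1 - ε * (n:ℝ)⁻¹) * M :=
        mul_le_mul_of_nonneg_left ih hcoefnn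
      have s2 : K * (n:ℝ)⁻¹ ≤ ε * (n:ℝ)⁻¹ * M := by
        rw [hKsplit]
        calc ε * (K / ε) * (n:ℝ)⁻¹ = ε * (n:ℝ)⁻¹ * (K / ε) := by ring
        _ ≤ ε * (n:ℝ)⁻¹ * M := by
            apply mul_le_mul_of_nonneg_left hMK
            positivity
      nlinarith
  refine ⟨M + ∑ k ∈ Finset.range (N+1), |(k:ℝ) ^ β * A k|, ?_⟩
  intro n hn1
  have hsum_nonneg : 0 ≤ ∑ k ∈ Finset.range (N+1), |(k:ℝ) ^ β * A k| :=
    Finset.sum_nonneg fun _ _ => abs_nonneg _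
  rcases le_or_gt N n with hNn | hnN
  · obtain ⟨m, rfl⟩ := Nat.exists_eq_add_of_le hNn
    exact le_trans (hbound m) (by linarith)
  · have hmem : n ∈ Finset.range (N+1) := Finset.mem_range.mpr (by omega)
    have h1 : (n:ℝ) ^ β * A n ≤ |(n:ℝ) ^ β * A n| := le_abs_self _
    have h2 := Finset.single_le_sum (f := fun k : ℕ => |(k:ℝ) ^ β * A k|)
      (fun i _ => abs_nonneg _) hmem
    have hM0 : 0 ≤ M := le_trans (div_nonneg hKnonneg hεpos.le) hMK
    linarith
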